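/- For affine games G, H and an affine game J different from ∞ and ∞̄: if G ≥ H then G + J ≥ H + J. -/

import Mathlib

inductive AGame : Type
  | inf : AGame
  | binf : AGame
  | node : List AGame → List AGame → AGame

namespace AGame

/-- The affine games: option sets are nonempty (hereditarily). -/
inductive Valid : AGame → Prop
  | inf : Valid .inf
  | binf : Valid .binf
  | node : ∀ {L R : List AGame}, L ≠ [] → R ≠ [] →
      (∀ g ∈ L, Valid g) → (∀ g ∈ R, Valid g) → Valid (.node L R)

/-- Total version of the disjunctive sum (value on the undefined cases `∞ + ∞̄` is junk). -/
def add' : AGame → AGame → AGame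
  | .inf, _ => .inf
  | _, .inf => .inf
  | .binf, _ => .binf
  | _, .binf => .binf
  | .node L R, .node L' R' =>
      .node ((L.attach.map fun x => add' x.1 (.node L' R')) ++
             (L'.attach.map fun y => add' (.node L R) y.1))
            ((R.attach.map fun x => add' x.1 (.node L' R')) ++
             (R'.attach.map fun y => add' (.node L R) y.1))
termination_by G H => sizeOf G + sizeOf H
decreasing_by
  all_goals
    simp_wf
    first
      | (have := List.sizeOf_lt_of_mem x.2; simp_all; omega)
      | (have := List.sizeOf_lt_of_mem y.2; simp_all; omega)

/-- The disjunctive sum, undefined (`none`) exactly when adding `∞` to `∞̄`. -/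
def add : AGame → AGame → Option AGame
  | .inf, .binf => none
  | .binf, .inf => none
  | G, H => some (add' G H)

mutual
/-- `o^L(G) = L` : Left, playing first, wins `G`. -/
def lf : AGame → Bool
  | .inf => true
  | .binf => false
  | .node L _ => L.attach.any fun x => ls x.1
termination_by G => sizeOf G
decreasing_by
  simp_wf; have := List.sizeOf_lt_of_mem x.2; simp_all; omega
/-- `o^R(G) = L` : Left, playing second, wins `G`. -/
def ls : AGame → Bool
  | .inf => true
  | .binf => false
  | .node _ R => R.attach.all fun x => lf x.1
termination_by G => sizeOf G
decreasing_by
  simp_wf; have := List.sizeOf_lt_of_mem x.2; simp_all; omega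
end

/-- The combined outcome `(o^L(G), o^R(G))`, encoded as a pair of booleans
(`true` = Left wins). `(true,true)` is 𝓛, `(true,false)` is 𝓝, `(false,true)` is 𝓟,
`(false,false)` is 𝓡. -/
def outcome (G : AGame) : Bool × Bool := (lf G, ls G)

/-- The partial order of outcomes (componentwise, 𝓛 maximal, 𝓡 minimal, 𝓝 ∥ 𝓟). -/
def OutLE (a b : Bool × Bool) : Prop :=
  (a.1 = true → b.1 = true) ∧ (a.2 = true → b.2 = true)

/-- `G ≥ H` : replacing `H` by `G` never hurts Left in any disjunctive sum. -/
def GE (G H : AGame) : Prop :=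
  ∀ X : AGame, Valid X → X ≠ .inf → X ≠ .binf →
    OutLE (outcome (add' H X)) (outcome (add' G X))

/-- Game equivalence. -/
def Equiv (G H : AGame) : Prop :=
  ∀ X : AGame, Valid X → X ≠ .inf → X ≠ .binf →
    outcome (add' G X) = outcome (add' H X)

/-- The zero game `{∞̄ | ∞}`. -/
def zero : AGame := .node [.binf] [.inf]

/-- The conjugate (players switch roles). -/
def neg : AGame → AGame
  | .inf => .binf
  | .binf => .inf
  | .node L R =>
      .node (R.attach.map fun x => neg x.1) (L.attach.map fun x => neg x.1)
termination_by G => sizeOf G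
decreasing_by
  all_goals
    simp_wf
    (have := List.sizeOf_lt_of_mem x.2; simp_all; omega)


/-- Left option set (empty list for the terminating games). -/
def leftOptions : AGame → List AGame
  | .node L _ => L
  | _ => []

/-- Right option set (empty list for the terminating games). -/
def rightOptions : AGame → List AGame
  | .node _ R => R
  | _ => []

/-- A check: a game having `∞` as a Left option or `∞̄` as a Right option. -/
def IsCheck : AGame → Prop
  | .node L R => .inf ∈ L ∨ .binf ∈ R
  | _ => False

/-- `Follower H G` : `H` is a follower of `G` (i.e. `G` itself, an option of `G`,
an option of an option, and so on). -/
inductive Follower : AGame → AGame → Prop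
  | refl (G : AGame) : Follower G G
  | left {H K : AGame} {L R : List AGame} : K ∈ L → Follower H K → Follower H (.node L R)
  | right {H K : AGame} {L R : List AGame} : K ∈ R → Follower H K → Follower H (.node L R)

/-- A Conway form: distinct from `∞` and `∞̄`, with no checks among its followers. -/
def ConwayForm (G : AGame) : Prop :=
  G ≠ .inf ∧ G ≠ .binf ∧ ∀ H, Follower H G → ¬ IsCheck H

/-- A Conway game: a game equivalent to some Conway form. -/
def ConwayGame (G : AGame) : Prop :=
  ∃ G', Valid G' ∧ ConwayForm G' ∧ Equiv G G'

/-- `J` is invertible: `J + K = 0` (in the sense of game equivalence) for some affine `K`. -/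
def Invertible (J : AGame) : Prop :=
  ∃ K, Valid K ∧ ∃ S, add J K = some S ∧ Equiv S zero

/-- Number forms: the images of the surreal-number Conway forms under the embedding
that replaces an empty option set by `{∞̄}` on the Left and by `{∞}` on the Right.
Every genuine Left option is strictly less than every genuine Right option, and
all genuine options are again number forms. -/
inductive NumForm : AGame → Prop
  | mk {L R : List AGame}
      (hL0 : L ≠ []) (hR0 : R ≠ [])
      (hLb : .binf ∈ L → L = [.binf]) (hRi : .inf ∈ R → R = [.inf])
      (hLnum : ∀ x ∈ L, x ≠ .binf → NumForm x)
      (hRnum : ∀ y ∈ R, y ≠ .inf → NumForm y)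
      (hlt : ∀ x ∈ L, ∀ y ∈ R, x ≠ .binf → y ≠ .inf → GE y x ∧ ¬ GE x y) :
      NumForm (.node L R)

/-- A number: an affine game equal to (the image of) a Conway number form. -/
def IsNumber (G : AGame) : Prop := ∃ n, Valid n ∧ NumForm n ∧ Equiv G n

/-- The pathetic tiny `⧾∞ = {0 | {0 | ∞̄}}`. -/
def tinyInf : AGame := .node [zero] [.node [zero] [.binf]]

/-- The pathetic miny `⧿∞ = {{∞ | 0} | 0}`. -/
def minyInf : AGame := .node [.node [.inf] [zero]] [zero]

end AGame

namespace AGame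

private theorem add'_inf_left (H : AGame) : add' .inf H = .inf := by rw [add']

private theorem add'_inf_right (G : AGame) : add' G .inf = .inf := by
  cases G <;> (rw [add'] <;> simp)

private theorem add'_binf_left (H : AGame) (h : H ≠ .inf) : add' .binf H = .binf := by
  cases H <;> first | exact absurd rfl h | (rw [add'] <;> simp_all)

private theorem add'_binf_right (G : AGame) (h : G ≠ .inf) : add' G .binf = .binf := by
  cases G <;> first | exact absurd rfl h | (rw [add'] <;> simp_all)

private theorem add'_node_node (L R L' R' : List AGame) :
    add' (.node L R) (.node L' R') =
      .node (L.map (fun x => add' x (.node L' R')) ++ L'.map (fun y => add' (.node L R) y))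
            (R.map (fun x => add' x (.node L' R')) ++ R'.map (fun y => add' (.node L R) y)) := by
  rw [add']
  simp [List.attach_map_val]

theorem add'_valid : ∀ G H : AGame, Valid G → Valid H → Valid (add' G H) := by
  intro G H
  induction G, H using add'.induct with
  | case1 x => intro _ _; rw [add'_inf_left]; exact .inf
  | case2 x hx =>
      intro _ _; rw [add'_inf_right]; exact .inf
  | case3 x hx =>
      intro _ _
      rw [add'_binf_left x (fun h => hx h)]; exact .binf
  | case4 x hx hx' =>
      intro _ _
      rw [add'_binf_right x (fun h => hx h)]; exact .binf
  | case5 L R L' R' ih1 ih2 ih3 ih4 =>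
      intro h1 h2
      cases h1 with | node hL hR hLv hRv =>
      cases h2 with | node hL' hR' hLv' hRv' =>
      rw [add'_node_node]
      refine .node ?_ ?_ ?_ ?_
      · simp [hL]
      · simp [hR]
      · intro g hg
        rcases List.mem_append.1 hg with hg | hg <;> rcases List.mem_map.1 hg with ⟨a, ha, rfl⟩
        · exact ih1 ⟨a, ha⟩ (hLv a ha) (.node hL' hR' hLv' hRv')
        · exact ih2 ⟨a, ha⟩ (.node hL hR hLv hRv) (hLv' a ha)
      · intro g hg
        rcases List.mem_append.1 hg with hg | hg <;> rcases List.mem_map.1 hg with ⟨a, ha, rfl⟩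
        · exact ih3 ⟨a, ha⟩ (hRv a ha) (.node hL' hR' hLv' hRv')
        · exact ih4 ⟨a, ha⟩ (.node hL hR hLv hRv) (hRv' a ha)

end AGame
namespace AGame

private theorem sizeOf_mem_lt {a : AGame} {L R : List AGame} (h : a ∈ L ∨ a ∈ R) :
    sizeOf a < sizeOf (AGame.node L R) := by
  rcases h with h | h <;> have := List.sizeOf_lt_of_mem h <;> simp <;> omega

theorem add'_assoc : ∀ (A B C : AGame), add' (add' A B) C = add' A (add' B C) := by
  have key : ∀ n (A B C : AGame), sizeOf A + sizeOf B + sizeOf C ≤ n →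
      add' (add' A B) C = add' A (add' B C) := by
    intro n
    induction n with
    | zero => intro A B C h; cases A <;> simp at h
    | succ n ih =>
      intro A B C hn
      match A, B, C with
      | .inf, B, C => simp [add'_inf_left]
      | .binf, .inf, C => simp [add'_inf_left, add'_inf_right]
      | .binf, .binf, C =>
          by_cases hC : C = .inf
          · subst hC; simp [add'_inf_right]
          · have h1 : add' .binf .binf = .binf := add'_binf_left _ (by simp)
            have h2 : add' .binf C = .binf := add'_binf_left _ hC
            rw [h1, h2, h1]
      | .binf, .node L R, C =>
          by_cases hC : C = .inf
          · subst hC; simp [add'_inf_right]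
          · have hBC : add' (.node L R) C ≠ .inf := by
              cases C with
              | inf => exact absurd rfl hC
              | binf => rw [add'_binf_right _ (by simp)]; simp
              | node L' R' => rw [add'_node_node]; simp
            rw [add'_binf_left (.node L R) (by simp), add'_binf_left C hC,
              add'_binf_left _ hBC]
      | .node L R, .inf, C => simp [add'_inf_left, add'_inf_right]
      | .node L R, .binf, C =>
          by_cases hC : C = .inf
          · subst hC; simp [add'_inf_left, add'_inf_right]
          · rw [add'_binf_right (.node L R) (by simp), add'_binf_left C hC,
              add'_binf_right (.node L R) (by simp)]
      | .node L R, .node L' R', .inf => simp [add'_inf_right]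
      | .node L R, .node L' R', .binf =>
          rw [add'_node_node, add'_binf_right _ (by simp), add'_binf_right _ (by simp),
            add'_binf_right _ (by simp)]
      | .node La Ra, .node Lb Rb, .node Lc Rc =>
          have IH1 : ∀ a ∈ La ++ Ra, add' (add' a (.node Lb Rb)) (.node Lc Rc)
              = add' a (add' (.node Lb Rb) (.node Lc Rc)) := by
            intro a ha
            refine ih a _ _ ?_
            have := sizeOf_mem_lt (L := La) (R := Ra) (by simpa using List.mem_append.1 ha)
            omega
          have IH2 : ∀ b ∈ Lb ++ Rb, add' (add' (.node La Ra) b) (.node Lc Rc)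
              = add' (.node La Ra) (add' b (.node Lc Rc)) := by
            intro b hb
            refine ih _ b _ ?_
            have := sizeOf_mem_lt (L := Lb) (R := Rb) (by simpa using List.mem_append.1 hb)
            omega
          have IH3 : ∀ c ∈ Lc ++ Rc, add' (add' (.node La Ra) (.node Lb Rb)) c
              = add' (.node La Ra) (add' (.node Lb Rb) c) := by
            intro c hc
            refine ih _ _ c ?_
            have := sizeOf_mem_lt (L := Lc) (R := Rc) (by simpa using List.mem_append.1 hc)
            omega
          rw [add'_node_node (L := Lb), add'_node_node (L := La) (L' := Lb),
            add'_node_node, add'_node_node]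
          congr 1 <;>
          · simp only [List.map_append, List.map_map, List.append_assoc]
            congr 1
            · refine List.map_congr_left fun a ha => ?_
              simp only [Function.comp_apply]
              rw [← add'_node_node]
              exact IH1 a (by simp [ha])
            congr 1
            · refine List.map_congr_left fun b hb => ?_
              simp only [Function.comp_apply]
              exact IH2 b (by simp [hb])
            · refine List.map_congr_left fun c hc => ?_
              simp only [Function.comp_apply]
              rw [← add'_node_node]
              exact IH3 c (by simp [hc])
  intro A B C
  exact key _ A B C le_rfl
end AGame
namespace AGame
/-- Order is compatible with adding a fixed non-infinite game. -/
theorem ge_add_right (G H J : AGame) (hG : Valid G) (hH : Valid H) (hJ : Valid J)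
    (hJ1 : J ≠ .inf) (hJ2 : J ≠ .binf) (h : GE G H) :
    GE (add' G J) (add' H J) := by
  intro X hX hX1 hX2
  rw [add'_assoc, add'_assoc]
  obtain ⟨Lj, Rj, rfl⟩ : ∃ Lj Rj, J = .node Lj Rj := by
    cases J with
    | inf => exact absurd rfl hJ1
    | binf => exact absurd rfl hJ2
    | node Lj Rj => exact ⟨Lj, Rj, rfl⟩
  obtain ⟨Lx, Rx, rfl⟩ : ∃ Lx Rx, X = .node Lx Rx := by
    cases X with
    | inf => exact absurd rfl hX1
    | binf => exact absurd rfl hX2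
    | node Lx Rx => exact ⟨Lx, Rx, rfl⟩
  rw [add'_node_node]
  exact h _ (by rw [← add'_node_node]; exact add'_valid _ _ hJ hX) (by simp) (by simp)
end AGame
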